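/- If the Ellis enveloping semigroup E(Ω,φ) is metrizable, then every operator in G(Ω,φ) is determined by its values on Dirac measures: whenever T₁, T₂ ∈ G(Ω,φ) satisfy T₁δ(ω) = T₂δ(ω) for all ω ∈ Ω, one has T₁ = T₂. -/

import Mathlib

open MeasureTheory Filter Topology

/-- The pairing `⟨f, μ⟩ = ∫ f dμ` of a function with a finite signed Borel measure,
defined via the Jordan decomposition of the signed measure. -/
noncomputable def spair {Ω : Type*} [MeasurableSpace Ω] (f : Ω → ℝ) (μ : SignedMeasure Ω) : ℝ :=
  (∫ ω, f ω ∂μ.toJordanDecomposition.posPart) - (∫ ω, f ω ∂μ.toJordanDecomposition.negPart)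

/-- The weak* topology on the space `X*` of finite signed Borel measures, i.e. the topology
of convergence of the pairings with all continuous functions `x ∈ C(Ω, ℝ)`. With this topology
on the codomain, the product topology on `SignedMeasure Ω → SignedMeasure Ω` is precisely the
weak* operator topology (pointwise convergence with `X*` in its weak* topology). -/
noncomputable instance weakStarTopology {Ω : Type*} [TopologicalSpace Ω] [MeasurableSpace Ω] :
    TopologicalSpace (SignedMeasure Ω) :=
  TopologicalSpace.induced (fun μ => fun x : C(Ω, ℝ) => spair (⇑x) μ) inferInstance

/-- The operator `V : X* → X*`, pushforward by `φ`: `(Vμ)(e) = μ(φ⁻¹ e)`. -/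
noncomputable def Vop {Ω : Type*} [MeasurableSpace Ω] (φ : Ω → Ω) :
    SignedMeasure Ω → SignedMeasure Ω :=
  fun μ => μ.map φ

/-- The Dirac measure at `ω`, as a signed measure. -/
noncomputable def diracSM {Ω : Type*} [MeasurableSpace Ω] (ω : Ω) : SignedMeasure Ω :=
  (Measure.dirac ω).toSignedMeasure

/-- `Γ(Ω,φ)`: the closure of `{Vⁿ : n ≥ 0}` in the weak* operator topology. -/
def GammaSG {Ω : Type*} [TopologicalSpace Ω] [MeasurableSpace Ω] (φ : Ω → Ω) :
    Set (SignedMeasure Ω → SignedMeasure Ω) :=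
  closure (Set.range fun n : ℕ => (Vop φ)^[n])

/-- `G(Ω,φ)`: the closure of the convex hull of `{Vⁿ : n ≥ 0}` in the weak* operator topology. -/
def GSG {Ω : Type*} [TopologicalSpace Ω] [MeasurableSpace Ω] (φ : Ω → Ω) :
    Set (SignedMeasure Ω → SignedMeasure Ω) :=
  closure (convexHull ℝ (Set.range fun n : ℕ => (Vop φ)^[n]))

/-- The kernel `L = {Q ∈ G(Ω,φ) : V ∘ Q = Q}` of the semigroup `G(Ω,φ)`. -/
def Lker {Ω : Type*} [TopologicalSpace Ω] [MeasurableSpace Ω] (φ : Ω → Ω) :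
    Set (SignedMeasure Ω → SignedMeasure Ω) :=
  {Q ∈ GSG φ | Vop φ ∘ Q = Q}

/-- The Ellis enveloping semigroup `E(Ω,φ)`: the closure of the iterates `{φⁿ : n ≥ 0}`
in the product topology (pointwise convergence) on `Ω → Ω`. -/
def EllisE {Ω : Type*} [TopologicalSpace Ω] (φ : Ω → Ω) : Set (Ω → Ω) :=
  closure (Set.range fun n : ℕ => φ^[n])

/-- `E_b(Ω,φ)`: the smallest set of self-maps of `Ω` containing the iterates `{φⁿ : n ≥ 0}`
and sequentially closed under pointwise convergence. -/
inductive Eb {Ω : Type*} [TopologicalSpace Ω] (φ : Ω → Ω) : (Ω → Ω) → Prop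
  | iterate (n : ℕ) : Eb φ φ^[n]
  | lim (p : ℕ → Ω → Ω) (q : Ω → Ω) (hp : ∀ k, Eb φ (p k))
      (hq : ∀ ω, Tendsto (fun k => p k ω) atTop (𝓝 (q ω))) : Eb φ q

/-- `E₁(Ω,φ)`: the set of pointwise limits of sequences of iterates `φ^{n_k}`. -/
def E1SG {Ω : Type*} [TopologicalSpace Ω] (φ : Ω → Ω) : Set (Ω → Ω) :=
  {p | ∃ n : ℕ → ℕ, ∀ ω, Tendsto (fun k => φ^[n k] ω) atTop (𝓝 (p ω))}

/-- An operator `P ∈ Γ(Ω,φ)` with `p = πP` is regular if `p` is Borel measurable and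
`(Pμ)(e) = μ(p⁻¹ e)` for every Borel probability measure `μ` and Borel set `e`. -/
def RegularOperator {Ω : Type*} [TopologicalSpace Ω] [MeasurableSpace Ω]
    (P : SignedMeasure Ω → SignedMeasure Ω) (p : Ω → Ω) : Prop :=
  Measurable p ∧ ∀ (μ : Measure Ω) [IsProbabilityMeasure μ],
    ∀ e : Set Ω, MeasurableSet e → P μ.toSignedMeasure e = (μ (p ⁻¹' e)).toReal

/-- A minimal set of the semicascade `(Ω,φ)`: a nonempty closed `φ`-invariant set containing
no proper nonempty closed `φ`-invariant subset. -/
def IsMinimalSet {Ω : Type*} [TopologicalSpace Ω] (φ : Ω → Ω) (m : Set Ω) : Prop :=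
  m.Nonempty ∧ IsClosed m ∧ Set.MapsTo φ m m ∧
    ∀ m' ⊆ m, m'.Nonempty → IsClosed m' → Set.MapsTo φ m' m' → m' = m

/-- The orbit closure of a point `ω`: the closure of the trajectory `{φⁿ ω : n ≥ 0}`. -/
def orbitClosure {Ω : Type*} [TopologicalSpace Ω] (φ : Ω → Ω) (ω : Ω) : Set Ω :=
  closure (Set.range fun n : ℕ => φ^[n] ω)

/-- A `φ`-ergodic measure: a `φ`-invariant Borel probability measure `μ` such that
`μ(e) ∈ {0,1}` for every Borel set `e` with `φ⁻¹ e = e`. -/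
def IsErgodicMeasure {Ω : Type*} [MeasurableSpace Ω] (φ : Ω → Ω) (μ : Measure Ω) : Prop :=
  IsProbabilityMeasure μ ∧ (∀ e : Set Ω, MeasurableSet e → μ (φ ⁻¹' e) = μ e) ∧
    (∀ e : Set Ω, MeasurableSet e → φ ⁻¹' e = e → μ e = 0 ∨ μ e = 1)

/-- The support of a Borel measure: the smallest closed set of full measure
(the intersection of all closed sets of full measure). -/
def msupp {Ω : Type*} [TopologicalSpace Ω] [MeasurableSpace Ω] (μ : Measure Ω) : Set Ω :=
  ⋂₀ {s : Set Ω | IsClosed s ∧ μ sᶜ = 0}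

/-- The semicascade `(Ω,φ)` is tame: for every continuous `x` and every strictly increasing
sequence `n(1) < n(2) < ⋯`, the infimum over finitely supported real coefficients `a` with
`Σ|aₖ| = 1` of the sup-norms `‖Σₖ aₖ · (x ∘ φ^{n(k)})‖` is `0`. -/
def Tame {Ω : Type*} [TopologicalSpace Ω] [CompactSpace Ω] (φ : Ω → Ω)
    (hφ : Continuous φ) : Prop :=
  ∀ (x : C(Ω, ℝ)) (n : ℕ → ℕ), StrictMono n →
    sInf {r : ℝ | ∃ a : ℕ →₀ ℝ, (∑ k ∈ a.support, |a k|) = 1 ∧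
      r = ‖∑ k ∈ a.support, a k • x.comp ⟨φ^[n k], hφ.iterate (n k)⟩‖} = 0

/-- Points `a, b` are proximal: `inf_{n ≥ 0} d(φⁿ a, φⁿ b) = 0`. -/
def Proximal {Ω : Type*} [PseudoMetricSpace Ω] (φ : Ω → Ω) (a b : Ω) : Prop :=
  (⨅ n : ℕ, dist (φ^[n] a) (φ^[n] b)) = 0

variable {Ω : Type*} [TopologicalSpace Ω] [CompactSpace Ω] [TopologicalSpace.MetrizableSpace Ω]
  [Nonempty Ω] [MeasurableSpace Ω] [BorelSpace Ω]

section MyAux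
set_option linter.unusedSectionVars false

variable {Ω : Type*} [TopologicalSpace Ω] [CompactSpace Ω] [TopologicalSpace.MetrizableSpace Ω]
  [Nonempty Ω] [MeasurableSpace Ω] [BorelSpace Ω]

private lemma my_integrable {f : Ω → ℝ} (hf : Continuous f) (m : MeasureTheory.Measure Ω)
    [MeasureTheory.IsFiniteMeasure m] : MeasureTheory.Integrable f m :=
  hf.integrable_of_hasCompactSupport (HasCompactSupport.of_compactSpace f)

private lemma my_spair_rep {f : Ω → ℝ} (hf : Continuous f) (p n : MeasureTheory.Measure Ω)
    [MeasureTheory.IsFiniteMeasure p] [MeasureTheory.IsFiniteMeasure n] :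
    spair f (p.toSignedMeasure - n.toSignedMeasure) = (∫ ω, f ω ∂p) - ∫ ω, f ω ∂n := by
  set ξ : MeasureTheory.SignedMeasure Ω := p.toSignedMeasure - n.toSignedMeasure with hξ
  set P := ξ.toJordanDecomposition.posPart with hP
  set N := ξ.toJordanDecomposition.negPart with hN
  have hrep : P.toSignedMeasure - N.toSignedMeasure = ξ := ξ.toSignedMeasure_toJordanDecomposition
  have key : P + n = p + N := by
    ext e he
    have h2 : (P e).toReal - (N e).toReal = (p e).toReal - (n e).toReal := by
      have h3 := congrArg (fun v : MeasureTheory.SignedMeasure Ω => v e) (hrep.trans hξ)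
      simpa [MeasureTheory.VectorMeasure.sub_apply,
        MeasureTheory.Measure.toSignedMeasure_apply_measurable he, he,
        MeasureTheory.measureReal_def] using h3
    rw [MeasureTheory.Measure.add_apply, MeasureTheory.Measure.add_apply,
      ← ENNReal.toReal_eq_toReal_iff' (by finiteness) (by finiteness),
      ENNReal.toReal_add (MeasureTheory.measure_ne_top _ _) (MeasureTheory.measure_ne_top _ _),
      ENNReal.toReal_add (MeasureTheory.measure_ne_top _ _) (MeasureTheory.measure_ne_top _ _)]
    linarith
  have hint : (∫ ω, f ω ∂P) + ∫ ω, f ω ∂n = (∫ ω, f ω ∂p) + ∫ ω, f ω ∂N := by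
    rw [← MeasureTheory.integral_add_measure (my_integrable hf P) (my_integrable hf n),
        ← MeasureTheory.integral_add_measure (my_integrable hf p) (my_integrable hf N), key]
  have hdef : spair f ξ = (∫ ω, f ω ∂P) - ∫ ω, f ω ∂N := rfl
  rw [hdef]
  linarith

open MeasureTheory in
private lemma my_spair_toSM {f : Ω → ℝ} (hf : Continuous f) (m : Measure Ω)
    [IsFiniteMeasure m] : spair f m.toSignedMeasure = ∫ ω, f ω ∂m := by
  have h := my_spair_rep hf m 0
  simpa [Measure.toSignedMeasure_zero] using h

open MeasureTheory in
private lemma my_spair_add {f : Ω → ℝ} (hf : Continuous f) (ξ η : SignedMeasure Ω) :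
    spair f (ξ + η) = spair f ξ + spair f η := by
  have hξ : ξ.toJordanDecomposition.posPart.toSignedMeasure
      - ξ.toJordanDecomposition.negPart.toSignedMeasure = ξ :=
    ξ.toSignedMeasure_toJordanDecomposition
  have hη : η.toJordanDecomposition.posPart.toSignedMeasure
      - η.toJordanDecomposition.negPart.toSignedMeasure = η :=
    η.toSignedMeasure_toJordanDecomposition
  rw [← hξ, ← hη]
  have harg : ∀ a b c d : SignedMeasure Ω, (a - b) + (c - d) = (a + c) - (b + d) := by
    intro a b c d; abel
  rw [harg, ← Measure.toSignedMeasure_add, ← Measure.toSignedMeasure_add,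
    my_spair_rep hf, my_spair_rep hf, my_spair_rep hf,
    integral_add_measure (my_integrable hf _) (my_integrable hf _),
    integral_add_measure (my_integrable hf _) (my_integrable hf _)]
  ring

open MeasureTheory in
private lemma my_smul_toSM (a : ℝ) (ha : 0 ≤ a) (p n : Measure Ω) [IsFiniteMeasure p]
    [IsFiniteMeasure n] :
    a • (p.toSignedMeasure - n.toSignedMeasure)
      = (a.toNNReal • p).toSignedMeasure - (a.toNNReal • n).toSignedMeasure := by
  ext e he
  rw [VectorMeasure.smul_apply, VectorMeasure.sub_apply, VectorMeasure.sub_apply,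
    Measure.toSignedMeasure_apply_measurable he, Measure.toSignedMeasure_apply_measurable he,
    Measure.toSignedMeasure_apply_measurable he, Measure.toSignedMeasure_apply_measurable he]
  simp only [measureReal_def, Measure.smul_apply, smul_eq_mul, NNReal.smul_def, ENNReal.toReal_smul]
  rw [Real.coe_toNNReal a ha]
  ring

open MeasureTheory in
private lemma my_spair_smul {f : Ω → ℝ} (hf : Continuous f) (a : ℝ) (ha : 0 ≤ a)
    (ξ : SignedMeasure Ω) : spair f (a • ξ) = a * spair f ξ := by
  have hξ : ξ.toJordanDecomposition.posPart.toSignedMeasure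
      - ξ.toJordanDecomposition.negPart.toSignedMeasure = ξ :=
    ξ.toSignedMeasure_toJordanDecomposition
  rw [← hξ, my_smul_toSM a ha, my_spair_rep hf, my_spair_rep hf]
  have e1 : (a.toNNReal • ξ.toJordanDecomposition.posPart)
      = ((a.toNNReal : ENNReal) • ξ.toJordanDecomposition.posPart) := rfl
  have e2 : (a.toNNReal • ξ.toJordanDecomposition.negPart)
      = ((a.toNNReal : ENNReal) • ξ.toJordanDecomposition.negPart) := rfl
  rw [e1, e2, integral_smul_measure, integral_smul_measure]
  simp only [ENNReal.coe_toReal, Real.coe_toNNReal a ha, smul_eq_mul]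
  ring

open MeasureTheory in
private lemma my_Vop_sub (φ : Ω → Ω) (hφ : Continuous φ) (ξ η : SignedMeasure Ω) :
    Vop φ (ξ - η) = Vop φ ξ - Vop φ η := by
  ext e he
  show (VectorMeasure.map (ξ - η) φ) e = (VectorMeasure.map ξ φ - VectorMeasure.map η φ) e
  rw [VectorMeasure.map_apply _ hφ.measurable he, VectorMeasure.sub_apply,
    VectorMeasure.sub_apply, VectorMeasure.map_apply _ hφ.measurable he,
    VectorMeasure.map_apply _ hφ.measurable he]

open MeasureTheory in
private lemma my_Vop_toSM (φ : Ω → Ω) (hφ : Continuous φ) (m : Measure Ω) [IsFiniteMeasure m] :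
    Vop φ m.toSignedMeasure = (m.map φ).toSignedMeasure := by
  ext e he
  show (VectorMeasure.map m.toSignedMeasure φ) e = (m.map φ).toSignedMeasure e
  rw [VectorMeasure.map_apply _ hφ.measurable he,
    Measure.toSignedMeasure_apply_measurable (hφ.measurable he),
    Measure.toSignedMeasure_apply_measurable he,
    measureReal_def, measureReal_def, Measure.map_apply hφ.measurable he]

open MeasureTheory in
private lemma my_Vop_rep (φ : Ω → Ω) (hφ : Continuous φ) (k : ℕ) (p n : Measure Ω)
    [IsFiniteMeasure p] [IsFiniteMeasure n] :
    (Vop φ)^[k] (p.toSignedMeasure - n.toSignedMeasure)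
      = (p.map φ^[k]).toSignedMeasure - (n.map φ^[k]).toSignedMeasure := by
  induction k with
  | zero => simp
  | succ k ih =>
    rw [Function.iterate_succ_apply', ih, my_Vop_sub φ hφ, my_Vop_toSM φ hφ, my_Vop_toSM φ hφ]
    simp only [Measure.map_map hφ.measurable ((hφ.iterate k).measurable),
      Function.iterate_succ' φ k]

open MeasureTheory in
private lemma my_combo_prop (φ : Ω → Ω) (hφ : Continuous φ) (x : C(Ω, ℝ)) :
    convexHull ℝ (Set.range fun n : ℕ => (Vop φ)^[n]) ⊆
      {Q : SignedMeasure Ω → SignedMeasure Ω |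
        ∃ v : C(Ω, ℝ), ‖v‖ ≤ ‖x‖ ∧
          (∀ (p n : Measure Ω) [IsFiniteMeasure p] [IsFiniteMeasure n],
            spair (⇑x) (Q (p.toSignedMeasure - n.toSignedMeasure))
              = (∫ ω, v ω ∂p) - ∫ ω, v ω ∂n) ∧
          ∀ (ε : ℝ) (ω ω' : Ω), (∀ q ∈ EllisE φ, |x (q ω) - x (q ω')| ≤ ε) →
            |v ω - v ω'| ≤ ε} := by
  apply convexHull_min
  · rintro Q ⟨k, rfl⟩
    refine ⟨x.comp ⟨φ^[k], hφ.iterate k⟩, ?_, ?_, ?_⟩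
    · exact (ContinuousMap.norm_le _ (norm_nonneg x)).mpr fun ω => x.norm_coe_le_norm _
    · intro p n _ _
      dsimp only
      rw [my_Vop_rep φ hφ k p n, my_spair_rep x.continuous,
        integral_map ((hφ.iterate k).measurable.aemeasurable) x.continuous.aestronglyMeasurable,
        integral_map ((hφ.iterate k).measurable.aemeasurable) x.continuous.aestronglyMeasurable]
      rfl
    · intro ε ω ω' hq
      exact hq _ (subset_closure ⟨k, rfl⟩)
  · rintro Q₁ ⟨v₁, hn₁, hs₁, he₁⟩ Q₂ ⟨v₂, hn₂, hs₂, he₂⟩ a b ha hb hab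
    refine ⟨a • v₁ + b • v₂, ?_, ?_, ?_⟩
    · refine (ContinuousMap.norm_le _ (norm_nonneg x)).mpr fun ω => ?_
      have b₁ : |v₁ ω| ≤ ‖x‖ := by
        rw [← Real.norm_eq_abs]; exact le_trans (v₁.norm_coe_le_norm ω) hn₁
      have b₂ : |v₂ ω| ≤ ‖x‖ := by
        rw [← Real.norm_eq_abs]; exact le_trans (v₂.norm_coe_le_norm ω) hn₂
      simp only [ContinuousMap.add_apply, ContinuousMap.smul_apply, smul_eq_mul,
        Real.norm_eq_abs]
      calc |a * v₁ ω + b * v₂ ω| ≤ |a * v₁ ω| + |b * v₂ ω| := abs_add_le _ _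
        _ = a * |v₁ ω| + b * |v₂ ω| := by
            rw [abs_mul, abs_mul, abs_of_nonneg ha, abs_of_nonneg hb]
        _ ≤ a * ‖x‖ + b * ‖x‖ := by gcongr
        _ = ‖x‖ := by rw [← add_mul, hab, one_mul]
    · intro p n _ _
      have happ : (a • Q₁ + b • Q₂) (p.toSignedMeasure - n.toSignedMeasure)
          = a • (Q₁ (p.toSignedMeasure - n.toSignedMeasure))
            + b • (Q₂ (p.toSignedMeasure - n.toSignedMeasure)) := rfl
      rw [happ, my_spair_add x.continuous, my_spair_smul x.continuous a ha,
        my_spair_smul x.continuous b hb, hs₁ p n, hs₂ p n]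
      have hint : ∀ (m : Measure Ω) [IsFiniteMeasure m],
          (∫ ω, (a • v₁ + b • v₂) ω ∂m) = a * (∫ ω, v₁ ω ∂m) + b * ∫ ω, v₂ ω ∂m := by
        intro m _
        simp only [ContinuousMap.add_apply, ContinuousMap.smul_apply, smul_eq_mul]
        rw [integral_add ((my_integrable v₁.continuous m).const_mul a)
          ((my_integrable v₂.continuous m).const_mul b), integral_const_mul, integral_const_mul]
      rw [hint p, hint n]
      ring
    · intro ε ω ω' hq
      have e₁ := he₁ ε ω ω' hq
      have e₂ := he₂ ε ω ω' hq
      have hval : (a • v₁ + b • v₂) ω - (a • v₁ + b • v₂) ω'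
          = a * (v₁ ω - v₁ ω') + b * (v₂ ω - v₂ ω') := by
        simp only [ContinuousMap.add_apply, ContinuousMap.smul_apply, smul_eq_mul]
        ring
      calc |(a • v₁ + b • v₂) ω - (a • v₁ + b • v₂) ω'|
          ≤ |a * (v₁ ω - v₁ ω')| + |b * (v₂ ω - v₂ ω')| := by rw [hval]; exact abs_add_le _ _
        _ = a * |v₁ ω - v₁ ω'| + b * |v₂ ω - v₂ ω'| := by
            rw [abs_mul, abs_mul, abs_of_nonneg ha, abs_of_nonneg hb]
        _ ≤ a * ε + b * ε := by
            have hε : 0 ≤ ε := le_trans (abs_nonneg _) e₁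
            gcongr
        _ = ε := by rw [← add_mul, hab, one_mul]

open MeasureTheory in
private lemma my_dirac_rep (ω : Ω) :
    diracSM ω = (Measure.dirac ω).toSignedMeasure - (0 : Measure Ω).toSignedMeasure := by
  rw [Measure.toSignedMeasure_zero, sub_zero]; rfl

open MeasureTheory in
private lemma my_spair_eval {x v : C(Ω, ℝ)} {Q : SignedMeasure Ω → SignedMeasure Ω}
    (hs : ∀ (p n : Measure Ω) [IsFiniteMeasure p] [IsFiniteMeasure n],
      spair (⇑x) (Q (p.toSignedMeasure - n.toSignedMeasure))
        = (∫ ω, v ω ∂p) - ∫ ω, v ω ∂n) (ω : Ω) :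
    spair (⇑x) (Q (diracSM ω)) = v ω := by
  rw [my_dirac_rep ω, hs (Measure.dirac ω) 0, integral_zero_measure, sub_zero,
    integral_dirac]

private lemma my_eval_continuous (x : C(Ω, ℝ)) (ν : MeasureTheory.SignedMeasure Ω) :
    Continuous fun Q : MeasureTheory.SignedMeasure Ω → MeasureTheory.SignedMeasure Ω =>
      spair (⇑x) (Q ν) :=
  by
  have h1 : Continuous (fun μ : MeasureTheory.SignedMeasure Ω =>
      fun y : C(Ω, ℝ) => spair (⇑y) μ) := continuous_induced_dom
  have h2 : Continuous (fun μ : MeasureTheory.SignedMeasure Ω => spair (⇑x) μ) :=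
    (continuous_apply x).comp h1
  exact h2.comp (continuous_apply ν)

open MeasureTheory in
private lemma my_gsg_diff_bound (φ : Ω → Ω) (hφ : Continuous φ) (x : C(Ω, ℝ))
    {T : SignedMeasure Ω → SignedMeasure Ω} (hT : T ∈ GSG φ) (ε : ℝ) (ω ω' : Ω)
    (hq : ∀ q ∈ EllisE φ, |x (q ω) - x (q ω')| ≤ ε) :
    |spair (⇑x) (T (diracSM ω)) - spair (⇑x) (T (diracSM ω'))| ≤ ε := by
  have hcont : Continuous fun Q : SignedMeasure Ω → SignedMeasure Ω =>
      (spair (⇑x) (Q (diracSM ω)), spair (⇑x) (Q (diracSM ω'))) :=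
    (my_eval_continuous x _).prodMk (my_eval_continuous x _)
  have hclosed : IsClosed {z : ℝ × ℝ | |z.1 - z.2| ≤ ε} :=
    isClosed_le ((continuous_fst.sub continuous_snd).abs) continuous_const
  have hsub : convexHull ℝ (Set.range fun n : ℕ => (Vop φ)^[n]) ⊆
      (fun Q : SignedMeasure Ω → SignedMeasure Ω =>
        (spair (⇑x) (Q (diracSM ω)), spair (⇑x) (Q (diracSM ω')))) ⁻¹'
        {z : ℝ × ℝ | |z.1 - z.2| ≤ ε} := by
    intro Q hQ
    obtain ⟨v, _, hs, he⟩ := my_combo_prop φ hφ x hQ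
    simp only [Set.mem_preimage, Set.mem_setOf_eq, my_spair_eval hs]
    exact he ε ω ω' hq
  exact closure_minimal hsub (hclosed.preimage hcont) hT

open MeasureTheory in
private lemma my_master (φ : Ω → Ω) (hφ : Continuous φ)
    (hmet : TopologicalSpace.MetrizableSpace (EllisE φ))
    {T : SignedMeasure Ω → SignedMeasure Ω} (hT : T ∈ GSG φ) (x : C(Ω, ℝ))
    (μ : SignedMeasure Ω) :
    spair (⇑x) (T μ)
      = (∫ ω, spair (⇑x) (T (diracSM ω)) ∂μ.toJordanDecomposition.posPart)
        - ∫ ω, spair (⇑x) (T (diracSM ω)) ∂μ.toJordanDecomposition.negPart := by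
  classical
  haveI : CompactSpace (EllisE φ) :=
    isCompact_iff_compactSpace.mp (IsClosed.isCompact isClosed_closure)
  haveI := hmet
  have hjc : ∀ ω : Ω, Continuous fun q : EllisE φ => x (q.1 ω) :=
    fun ω => x.continuous.comp ((continuous_apply ω).comp continuous_subtype_val)
  set j : Ω → C(EllisE φ, ℝ) := fun ω => ⟨fun q => x (q.1 ω), hjc ω⟩ with hj
  obtain ⟨s, hs_count, hs_dense⟩ := TopologicalSpace.exists_countable_dense (↥(Set.range j))
  have hs_ne : s.Nonempty := hs_dense.nonempty
  obtain ⟨f0, hf0⟩ := hs_count.exists_eq_range hs_ne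
  set g : ℕ → Ω := fun m => (f0 m).2.choose with hg
  have hgj : ∀ m, j ((f0 m).2.choose) = (f0 m).1 := fun m => (f0 m).2.choose_spec
  have happrox : ∀ (ω : Ω) (ε : ℝ), 0 < ε → ∃ m : ℕ,
      ∀ q ∈ EllisE φ, |x (q ω) - x (q (g m))| ≤ ε := by
    intro ω ε hε
    have hcl : (⟨j ω, Set.mem_range_self ω⟩ : ↥(Set.range j)) ∈ closure s := hs_dense _
    rw [Metric.mem_closure_iff] at hcl
    obtain ⟨b, hb_s, hb_d⟩ := hcl ε hε
    rw [hf0] at hb_s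
    obtain ⟨m, rfl⟩ := hb_s
    refine ⟨m, fun q hq => ?_⟩
    calc |x (q ω) - x (q (g m))| = dist ((j ω) ⟨q, hq⟩) ((j (g m)) ⟨q, hq⟩) := by
          rw [Real.dist_eq]; rfl
      _ ≤ dist (j ω) (j (g m)) := ContinuousMap.dist_apply_le_dist _
      _ = dist (⟨j ω, Set.mem_range_self ω⟩ : ↥(Set.range j)) (f0 m) := by
          rw [Subtype.dist_eq]
          have : j (g m) = (f0 m).1 := hgj m
          rw [this]
      _ ≤ ε := le_of_lt hb_d
  set μp := μ.toJordanDecomposition.posPart with hμp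
  set μn := μ.toJordanDecomposition.negPart with hμn
  set y : Ω → ℝ := fun ω => spair (⇑x) (T (diracSM ω)) with hy
  set ρ : (SignedMeasure Ω → SignedMeasure Ω) → (ℕ → ℝ) × ℝ :=
    fun Q => (fun m => spair (⇑x) (Q (diracSM (g m))), spair (⇑x) (Q μ)) with hρ
  have hρc : Continuous ρ :=
    (continuous_pi fun m => my_eval_continuous x _).prodMk (my_eval_continuous x _)
  have hmem : ρ T ∈ closure (ρ '' (convexHull ℝ (Set.range fun n : ℕ => (Vop φ)^[n]))) :=
    image_closure_subset_closure_image hρc ⟨T, hT, rfl⟩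
  obtain ⟨u, hu_mem, hu_lim⟩ := mem_closure_iff_seq_limit.mp hmem
  choose Qs hQs hQs_eq using hu_mem
  choose v hv_norm hv_spair hv_eps using fun k => my_combo_prop φ hφ x (hQs k)
  have hveval : ∀ k ω0, spair (⇑x) (Qs k (diracSM ω0)) = v k ω0 :=
    fun k ω0 => my_spair_eval (hv_spair k) ω0
  have h1 : ∀ m : ℕ, Filter.Tendsto (fun k => v k (g m)) atTop (𝓝 (y (g m))) := by
    intro m
    have ht : Filter.Tendsto (fun k => (u k).1 m) atTop (𝓝 ((ρ T).1 m)) :=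
      (((continuous_apply m).comp continuous_fst).tendsto (ρ T)).comp hu_lim
    exact Filter.Tendsto.congr (fun k => by rw [← hQs_eq k]; exact hveval k (g m)) ht
  have h2 : Filter.Tendsto (fun k => spair (⇑x) (Qs k μ)) atTop (𝓝 (spair (⇑x) (T μ))) := by
    have ht : Filter.Tendsto (fun k => (u k).2) atTop (𝓝 ((ρ T).2)) :=
      (continuous_snd.tendsto (ρ T)).comp hu_lim
    exact Filter.Tendsto.congr (fun k => by rw [← hQs_eq k]) ht
  have hptw : ∀ ω0 : Ω, Filter.Tendsto (fun k => v k ω0) atTop (𝓝 (y ω0)) := by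
    intro ω0
    rw [Metric.tendsto_atTop]
    intro ε hε
    obtain ⟨m, hm⟩ := happrox ω0 (ε/4) (by positivity)
    have hTd : |y ω0 - y (g m)| ≤ ε/4 := my_gsg_diff_bound φ hφ x hT (ε/4) ω0 (g m) hm
    obtain ⟨N, hN⟩ := Metric.tendsto_atTop.mp (h1 m) (ε/4) (by positivity)
    refine ⟨N, fun k hk => ?_⟩
    have hv4 : |v k ω0 - v k (g m)| ≤ ε/4 := hv_eps k (ε/4) ω0 (g m) hm
    have h3 := hN k hk
    rw [Real.dist_eq] at h3 ⊢
    have t1 := abs_sub_le (v k ω0) (v k (g m)) (y ω0)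
    have t2 := abs_sub_le (v k (g m)) (y (g m)) (y ω0)
    have t3 : |y (g m) - y ω0| = |y ω0 - y (g m)| := abs_sub_comm _ _
    linarith
  have hbd : ∀ (k : ℕ) (ω0 : Ω), ‖v k ω0‖ ≤ ‖x‖ :=
    fun k ω0 => le_trans ((v k).norm_coe_le_norm ω0) (hv_norm k)
  have hdct : ∀ (mm : Measure Ω) [IsFiniteMeasure mm],
      Filter.Tendsto (fun k => ∫ ω0, v k ω0 ∂mm) atTop (𝓝 (∫ ω0, y ω0 ∂mm)) := by
    intro mm _
    exact tendsto_integral_of_dominated_convergence (fun _ => ‖x‖)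
      (fun k => (v k).continuous.aestronglyMeasurable) (integrable_const _)
      (fun k => Filter.Eventually.of_forall fun ω0 => hbd k ω0)
      (Filter.Eventually.of_forall hptw)
  have hfinal := (hdct μp).sub (hdct μn)
  have hμrep : μ = μp.toSignedMeasure - μn.toSignedMeasure :=
    (μ.toSignedMeasure_toJordanDecomposition).symm
  have h2' : Filter.Tendsto (fun k => (∫ ω0, v k ω0 ∂μp) - ∫ ω0, v k ω0 ∂μn) atTop
      (𝓝 (spair (⇑x) (T μ))) := by
    refine Filter.Tendsto.congr (fun k => ?_) h2
    rw [hμrep]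
    exact hv_spair k μp μn
  exact tendsto_nhds_unique h2' hfinal

end MyAux

/-- (a1) ⇒ (a4): if `E(Ω,φ)` is metrizable, then every operator `T ∈ G(Ω,φ)` is determined
by its values on the Dirac measures. -/
theorem stmt_9 (φ : Ω → Ω) (hφ : Continuous φ)
    (hmet : TopologicalSpace.MetrizableSpace (EllisE φ))
    (T₁ T₂ : SignedMeasure Ω → SignedMeasure Ω) (h₁ : T₁ ∈ GSG φ) (h₂ : T₂ ∈ GSG φ)
    (h : ∀ ω : Ω, T₁ (diracSM ω) = T₂ (diracSM ω)) :
    T₁ = T₂ := by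
  funext μ
  have hx : ∀ x : C(Ω, ℝ), spair (⇑x) (T₁ μ) = spair (⇑x) (T₂ μ) := by
    intro x
    rw [my_master φ hφ hmet h₁ x μ, my_master φ hφ hmet h₂ x μ]
    simp only [h]
  set ξ := T₁ μ with hξeq
  set η := T₂ μ with hηeq
  set P₁ := ξ.toJordanDecomposition.posPart with hP₁
  set N₁ := ξ.toJordanDecomposition.negPart with hN₁
  set P₂ := η.toJordanDecomposition.posPart with hP₂
  set N₂ := η.toJordanDecomposition.negPart with hN₂
  have key : ∀ x : C(Ω, ℝ), (∫ ω, x ω ∂(P₁ + N₂)) = ∫ ω, x ω ∂(P₂ + N₁) := by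
    intro x
    have hx' := hx x
    have e1 : spair (⇑x) ξ = (∫ ω, x ω ∂P₁) - ∫ ω, x ω ∂N₁ := rfl
    have e2 : spair (⇑x) η = (∫ ω, x ω ∂P₂) - ∫ ω, x ω ∂N₂ := rfl
    rw [MeasureTheory.integral_add_measure (my_integrable x.continuous _)
        (my_integrable x.continuous _),
      MeasureTheory.integral_add_measure (my_integrable x.continuous _)
        (my_integrable x.continuous _)]
    rw [e1, e2] at hx'
    linarith
  have hmeas : P₁ + N₂ = P₂ + N₁ := by
    apply MeasureTheory.ext_of_forall_lintegral_eq_of_IsFiniteMeasure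
    intro f
    have hxf := key ⟨fun ω => (f ω : ℝ), NNReal.continuous_coe.comp f.continuous⟩
    have e1 := BoundedContinuousFunction.toReal_lintegral_coe_eq_integral f (P₁ + N₂)
    have e2 := BoundedContinuousFunction.toReal_lintegral_coe_eq_integral f (P₂ + N₁)
    have t1 := BoundedContinuousFunction.lintegral_lt_top_of_nnreal (P₁ + N₂) f
    have t2 := BoundedContinuousFunction.lintegral_lt_top_of_nnreal (P₂ + N₁) f
    rw [← ENNReal.toReal_eq_toReal_iff' t1.ne t2.ne, e1, e2]
    exact hxf
  have r1 : P₁.toSignedMeasure - N₁.toSignedMeasure = ξ := ξ.toSignedMeasure_toJordanDecomposition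
  have r2 : P₂.toSignedMeasure - N₂.toSignedMeasure = η := η.toSignedMeasure_toJordanDecomposition
  rw [← r1, ← r2, sub_eq_sub_iff_add_eq_add, ← MeasureTheory.Measure.toSignedMeasure_add,
    ← MeasureTheory.Measure.toSignedMeasure_add]
  ext e he
  rw [MeasureTheory.Measure.toSignedMeasure_apply_measurable he,
    MeasureTheory.Measure.toSignedMeasure_apply_measurable he, hmeas]
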